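/- Ordered (plane) rooted binary trees with n+1 leaves and unit edge lengths are uniquely determined by their sequence of consecutive leaf-to-leaf distances (d_{0,1}, d_{1,2}, ..., d_{n−1,n}): if two such trees have the same sequence of distances between order-consecutive leaves, they are isomorphic as ordered rooted trees. -/

import Mathlib

/-- Ordered (plane) rooted binary trees: every internal vertex has exactly two ordered
children; all edges have length 1. -/
inductive BTree : Type
  | leaf : BTree
  | node : BTree → BTree → BTree

/-- Depth of the leftmost leaf. -/
def BTree.ldepth : BTree → ℕ
  | .leaf => 0
  | .node l _ => l.ldepth + 1

/-- Depth of the rightmost leaf. -/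
def BTree.rdepth : BTree → ℕ
  | .leaf => 0
  | .node _ r => r.rdepth + 1

/-- The list of graph distances `d_{0,1}, d_{1,2}, ..., d_{n-1,n}` between consecutive
leaves in the left-to-right plane order. -/
def BTree.dists : BTree → List ℕ
  | .leaf => []
  | .node l r => l.dists ++ [l.rdepth + r.ldepth + 2] ++ r.dists

/-! ### Auxiliary machinery -/

def BTree.numLeaves : BTree → ℕ
  | .leaf => 1
  | .node l r => l.numLeaves + r.numLeaves

/-- Contract the leftmost cherry (pair of sibling leaves). -/
def BTree.contract : BTree → BTree
  | .leaf => .leaf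
  | .node .leaf .leaf => .leaf
  | .node .leaf (.node a b) => .node .leaf ((BTree.node a b).contract)
  | .node (.node a b) r => .node ((BTree.node a b).contract) r

/-- Index (in `dists`) of the leftmost cherry. -/
def BTree.f2 : BTree → ℕ
  | .leaf => 0
  | .node .leaf .leaf => 0
  | .node .leaf (.node a b) => (BTree.node a b).f2 + 1
  | .node (.node a b) _ => (BTree.node a b).f2

/-- Whether the leftmost cherry's entry is the last entry of `dists`. -/
def BTree.lastTwo : BTree → Bool
  | .leaf => false
  | .node .leaf .leaf => true
  | .node .leaf (.node a b) => (BTree.node a b).lastTwo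
  | .node (.node _ _) _ => false

/-- Expand leaf number `p` into a cherry. -/
def BTree.expand : BTree → ℕ → BTree
  | .leaf, _ => .node .leaf .leaf
  | .node l r, p =>
      if p < l.numLeaves then .node (l.expand p) r
      else .node l (r.expand (p - l.numLeaves))

def decHead : List ℕ → List ℕ
  | [] => []
  | y :: ys => (y - 1) :: ys

/-- The effect of cherry-contraction on the distance list: remove the first `2`
and decrement its neighbours. -/
def dcontract : List ℕ → List ℕ
  | [] => []
  | x :: xs =>
      if x = 2 then decHead xs
      else (if xs.head? = some 2 then x - 1 else x) :: dcontract xs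

/-- Index of the first `2`. -/
def lf2 : List ℕ → ℕ
  | [] => 0
  | x :: xs => if x = 2 then 0 else lf2 xs + 1

lemma BTree.dists_node (l r : BTree) :
    (BTree.node l r).dists = l.dists ++ ((l.rdepth + r.ldepth + 2) :: r.dists) := by
  simp [BTree.dists]

lemma BTree.dists_ne_nil (l r : BTree) : (BTree.node l r).dists ≠ [] := by
  simp [BTree.dists]

lemma BTree.eq_leaf_of_dists_nil (s : BTree) (h : s.dists = []) : s = .leaf := by
  cases s with
  | leaf => rfl
  | node l r => exact absurd h (BTree.dists_ne_nil l r)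

lemma BTree.ldepth_pos (l r : BTree) : 0 < (BTree.node l r).ldepth := by
  simp [BTree.ldepth]

lemma BTree.rdepth_pos (l r : BTree) : 0 < (BTree.node l r).rdepth := by
  simp [BTree.rdepth]

lemma BTree.numLeaves_pos (s : BTree) : 0 < s.numLeaves := by
  induction s with
  | leaf => simp [BTree.numLeaves]
  | node l r ihl ihr => simp [BTree.numLeaves]; omega

lemma BTree.contract_node_leaf (a b : BTree) :
    (BTree.node BTree.leaf (BTree.node a b)).contract
      = BTree.node BTree.leaf ((BTree.node a b).contract) := rfl

lemma BTree.contract_node_node (a b r : BTree) :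
    (BTree.node (BTree.node a b) r).contract
      = BTree.node ((BTree.node a b).contract) r := rfl

lemma BTree.lastTwo_node_leaf (a b : BTree) :
    (BTree.node BTree.leaf (BTree.node a b)).lastTwo = (BTree.node a b).lastTwo := rfl

lemma BTree.lastTwo_node_node (a b r : BTree) :
    (BTree.node (BTree.node a b) r).lastTwo = false := rfl

lemma BTree.numLeaves_contract : ∀ s : BTree, s ≠ .leaf →
    s.contract.numLeaves + 1 = s.numLeaves := by
  intro s
  induction s with
  | leaf => intro h; exact absurd rfl h
  | node l r ihl ihr =>
    intro _
    cases l with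
    | leaf =>
      cases r with
      | leaf => simp [BTree.contract, BTree.numLeaves]
      | node a b =>
        have := ihr (by simp)
        simp [BTree.contract, BTree.numLeaves] at this ⊢
        omega
    | node a b =>
      have := ihl (by simp)
      simp [BTree.contract, BTree.numLeaves] at this ⊢
      omega

lemma BTree.f2_lt : ∀ s : BTree, s ≠ .leaf → s.f2 + 2 ≤ s.numLeaves := by
  intro s
  induction s with
  | leaf => intro h; exact absurd rfl h
  | node l r ihl ihr =>
    intro _
    cases l with
    | leaf =>
      cases r with
      | leaf => simp [BTree.f2, BTree.numLeaves]
      | node a b =>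
        have := ihr (by simp)
        simp [BTree.f2, BTree.numLeaves] at this ⊢
        omega
    | node a b =>
      have := ihl (by simp)
      have := BTree.numLeaves_pos r
      simp [BTree.f2, BTree.numLeaves] at *
      omega

lemma BTree.expand_contract : ∀ s : BTree, s ≠ .leaf →
    s.contract.expand s.f2 = s := by
  intro s
  induction s with
  | leaf => intro h; exact absurd rfl h
  | node l r ihl ihr =>
    intro _
    cases l with
    | leaf =>
      cases r with
      | leaf => simp [BTree.contract, BTree.f2, BTree.expand]
      | node a b =>
        have hr := ihr (by simp)
        simp only [BTree.contract, BTree.f2, BTree.expand, BTree.numLeaves]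
        simp only [show ¬ ((BTree.node a b).f2 + 1 < 1) by omega, if_false]
        simp only [Nat.add_sub_cancel]
        rw [hr]
    | node a b =>
      have hl := ihl (by simp)
      have h1 := BTree.numLeaves_contract (BTree.node a b) (by simp)
      have h2 := BTree.f2_lt (BTree.node a b) (by simp)
      simp only [BTree.contract, BTree.f2, BTree.expand]
      rw [if_pos (by omega), hl]

lemma BTree.ldepth_contract : ∀ s : BTree, s ≠ .leaf →
    s.contract.ldepth = if s.dists.head? = some 2 then s.ldepth - 1 else s.ldepth := by
  intro s
  induction s with
  | leaf => intro h; exact absurd rfl h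
  | node l r ihl ihr =>
    intro _
    cases l with
    | leaf =>
      cases r with
      | leaf => simp [BTree.contract, BTree.dists, BTree.ldepth, BTree.rdepth]
      | node a b =>
        have h1 := BTree.ldepth_pos a b
        simp [BTree.contract, BTree.dists, BTree.ldepth, BTree.rdepth]
    | node a b =>
      have hl := ihl (by simp)
      have h1 := BTree.ldepth_pos a b
      have h2 := BTree.dists_ne_nil a b
      rw [BTree.dists_node, List.head?_append_of_ne_nil _ h2, BTree.contract_node_node]
      simp only [BTree.ldepth]
      rw [hl]
      have h3 : (BTree.node a b).ldepth = a.ldepth + 1 := rfl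
      by_cases hh : (BTree.node a b).dists.head? = some 2 <;> simp [hh] <;> omega

lemma BTree.rdepth_contract : ∀ s : BTree, s ≠ .leaf →
    s.contract.rdepth = if s.lastTwo then s.rdepth - 1 else s.rdepth := by
  intro s
  induction s with
  | leaf => intro h; exact absurd rfl h
  | node l r ihl ihr =>
    intro _
    cases l with
    | leaf =>
      cases r with
      | leaf => simp [BTree.contract, BTree.lastTwo, BTree.rdepth]
      | node a b =>
        have hr := ihr (by simp)
        have h1 := BTree.rdepth_pos a b
        rw [BTree.contract_node_leaf, BTree.lastTwo_node_leaf]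
        simp only [BTree.rdepth]
        rw [hr]
        have h3 : (BTree.node a b).rdepth = b.rdepth + 1 := rfl
        by_cases hL : (BTree.node a b).lastTwo = true <;> simp [hL] <;> omega
    | node a b =>
      rw [BTree.contract_node_node, BTree.lastTwo_node_node]
      simp [BTree.rdepth]

lemma dcontract_dists : ∀ s : BTree, s ≠ .leaf → ∀ B : List ℕ,
    dcontract (s.dists ++ B) =
      s.contract.dists ++ (if s.lastTwo then decHead B else B) := by
  intro s
  induction s with
  | leaf => intro h; exact absurd rfl h
  | node l r ihl ihr =>
    intro _ B
    cases l with
    | leaf =>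
      cases r with
      | leaf =>
        simp [BTree.dists, BTree.contract, BTree.lastTwo, BTree.rdepth, BTree.ldepth,
          dcontract]
      | node a b =>
        have hr := ihr (by simp) B
        have hld := BTree.ldepth_contract (BTree.node a b) (by simp)
        have h1 := BTree.ldepth_pos a b
        have h2 := BTree.dists_ne_nil a b
        rw [BTree.dists_node BTree.leaf (BTree.node a b), BTree.contract_node_leaf,
          BTree.dists_node BTree.leaf ((BTree.node a b).contract),
          BTree.lastTwo_node_leaf]
        simp only [show BTree.leaf.dists = ([] : List ℕ) from rfl,
          show BTree.leaf.rdepth = 0 from rfl, List.nil_append, List.cons_append,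
          Nat.zero_add]
        rw [dcontract]
        rw [if_neg (by omega)]
        rw [List.head?_append_of_ne_nil _ h2, hr]
        have hhead : (if (BTree.node a b).dists.head? = some 2
            then (BTree.node a b).ldepth + 2 - 1 else (BTree.node a b).ldepth + 2)
            = (BTree.node a b).contract.ldepth + 2 := by
          rw [hld]
          by_cases hh : (BTree.node a b).dists.head? = some 2 <;> simp [hh] <;> omega
        rw [hhead]
    | node a b =>
      have hl := ihl (by simp)
        (((BTree.node a b).rdepth + r.ldepth + 2) :: (r.dists ++ B))
      have hrd := BTree.rdepth_contract (BTree.node a b) (by simp)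
      have h1 := BTree.rdepth_pos a b
      rw [BTree.dists_node (BTree.node a b) r, BTree.contract_node_node,
        BTree.dists_node ((BTree.node a b).contract) r, BTree.lastTwo_node_node]
      simp only [List.append_assoc, List.cons_append, if_neg Bool.false_ne_true,
        Bool.false_eq_true, if_false]
      rw [hl]
      congr 1
      rw [hrd]
      by_cases hL : (BTree.node a b).lastTwo = true <;> simp [hL, decHead] <;> omega

lemma lf2_dists : ∀ s : BTree, s ≠ .leaf → ∀ B : List ℕ,
    lf2 (s.dists ++ B) = s.f2 := by
  intro s
  induction s with
  | leaf => intro h; exact absurd rfl h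
  | node l r ihl ihr =>
    intro _ B
    cases l with
    | leaf =>
      cases r with
      | leaf => simp [BTree.dists, BTree.f2, BTree.rdepth, BTree.ldepth, lf2]
      | node a b =>
        have hr := ihr (by simp) B
        have h1 := BTree.ldepth_pos a b
        have : (BTree.node BTree.leaf (BTree.node a b)).f2 = (BTree.node a b).f2 + 1 := rfl
        rw [this, BTree.dists_node BTree.leaf (BTree.node a b)]
        simp only [show BTree.leaf.dists = ([] : List ℕ) from rfl,
          show BTree.leaf.rdepth = 0 from rfl, List.nil_append, List.cons_append,
          Nat.zero_add]
        rw [lf2, if_neg (by omega), hr]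
    | node a b =>
      have hl := ihl (by simp)
        (((BTree.node a b).rdepth + r.ldepth + 2) :: (r.dists ++ B))
      have : (BTree.node (BTree.node a b) r).f2 = (BTree.node a b).f2 := rfl
      rw [this, BTree.dists_node (BTree.node a b) r]
      simp only [List.append_assoc, List.cons_append]
      rw [hl]

lemma dcontract_dists' (s : BTree) (hs : s ≠ .leaf) :
    dcontract s.dists = s.contract.dists := by
  have := dcontract_dists s hs []
  simpa [decHead] using this

lemma key : ∀ n : ℕ, ∀ s t : BTree, s.numLeaves ≤ n → s.dists = t.dists → s = t := by
  intro n
  induction n with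
  | zero =>
    intro s t hn
    have := BTree.numLeaves_pos s
    omega
  | succ n ih =>
    intro s t hn h
    by_cases hs : s = BTree.leaf
    · subst hs
      exact (BTree.eq_leaf_of_dists_nil t (by simpa [BTree.dists] using h.symm)).symm
    by_cases ht : t = BTree.leaf
    · subst ht
      exact BTree.eq_leaf_of_dists_nil s (by simpa [BTree.dists] using h)
    have h1 : s.contract.dists = t.contract.dists := by
      rw [← dcontract_dists' s hs, ← dcontract_dists' t ht, h]
    have hn' : s.contract.numLeaves ≤ n := by
      have := BTree.numLeaves_contract s hs
      omega
    have h2 : s.contract = t.contract := ih _ _ hn' h1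
    have h3 : s.f2 = t.f2 := by
      have hs' := lf2_dists s hs []
      have ht' := lf2_dists t ht []
      simp only [List.append_nil] at hs' ht'
      rw [← hs', ← ht', h]
    calc s = s.contract.expand s.f2 := (BTree.expand_contract s hs).symm
      _ = t.contract.expand t.f2 := by rw [h2, h3]
      _ = t := BTree.expand_contract t ht

/-- An ordered rooted binary tree with unit edge lengths is uniquely determined by its
sequence of consecutive leaf-to-leaf distances. -/
theorem btree_determined_by_consecutive_leaf_distances (s t : BTree)
    (h : s.dists = t.dists) : s = t := by
  exact key s.numLeaves s t le_rfl h
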